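/- Let G be a group, and let {A_1, …, A_m} and {B_1, …, B_n} be malnormal collections of subgroups of G. Suppose H = A_i ∩ w⁻¹ B_j w and H' = A_{i'} ∩ w'⁻¹ B_{j'} w' (with w, w' ∈ G) are subgroups such that H ∩ g H' g⁻¹ ≠ {1} for some g ∈ G. Then i = i', j = j', and g H' g⁻¹ = H. Moreover, if in addition i = i', j = j' and w = w', then g ∈ H. -/
import Mathlib


/-- The conjugate subgroup `g K g⁻¹`. -/
def conjSub {G : Type*} [Group G] (g : G) (K : Subgroup G) : Subgroup G :=
  Subgroup.map (MulAut.conj g).toMonoidHom K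

lemma mem_conjSub {G : Type*} [Group G] {g x : G} {K : Subgroup G} :
    x ∈ conjSub g K ↔ g⁻¹ * x * g ∈ K := by
  unfold conjSub
  rw [show (MulAut.conj g).toMonoidHom = ((MulAut.conj g) : G ≃* G).toMonoidHom from rfl,
    Subgroup.mem_map_equiv]
  simp [MulAut.conj]

lemma conjSub_inf {G : Type*} [Group G] (g : G) (K L : Subgroup G) :
    conjSub g (K ⊓ L) = conjSub g K ⊓ conjSub g L := by
  ext x; simp [mem_conjSub, Subgroup.mem_inf]

lemma conjSub_mul {G : Type*} [Group G] (a b : G) (K : Subgroup G) :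
    conjSub (a * b) K = conjSub a (conjSub b K) := by
  ext x; simp [mem_conjSub, mul_assoc]

lemma conjSub_self {G : Type*} [Group G] {g : G} {K : Subgroup G} (hg : g ∈ K) :
    conjSub g K = K := by
  ext x
  simp only [mem_conjSub]
  constructor
  · intro h
    have := K.mul_mem (K.mul_mem hg h) (K.inv_mem hg)
    convert this using 1
    group
  · intro h
    exact K.mul_mem (K.mul_mem (K.inv_mem hg) h) hg

lemma ne_bot_of_mem {G : Type*} [Group G] {K : Subgroup G} {x : G} (hx : x ∈ K)
    (hx1 : x ≠ 1) : K ≠ ⊥ := by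
  intro h
  rw [h, Subgroup.mem_bot] at hx
  exact hx1 hx

/-- Let `{A_1,…,A_m}` and `{B_1,…,B_n}` be malnormal collections of subgroups of `G`.
If `H = A i ⊓ w⁻¹ (B j) w` and `H' = A i' ⊓ w'⁻¹ (B j') w'` satisfy
`H ⊓ g H' g⁻¹ ≠ {1}` for some `g ∈ G`, then `i = i'`, `j = j'` and `g H' g⁻¹ = H`.
Moreover, if in addition `i = i'`, `j = j'` and `w = w'`, then `g ∈ H`. -/
theorem meet_malnormal {G : Type*} [Group G] {m n : ℕ}
    (A : Fin m → Subgroup G) (B : Fin n → Subgroup G)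
    (hA : ∀ s t : Fin m, ∀ g : G, A s ⊓ conjSub g (A t) ≠ ⊥ → s = t ∧ g ∈ A s)
    (hB : ∀ s t : Fin n, ∀ g : G, B s ⊓ conjSub g (B t) ≠ ⊥ → s = t ∧ g ∈ B s)
    (i i' : Fin m) (j j' : Fin n) (w w' g : G)
    (hnt : (A i ⊓ conjSub w⁻¹ (B j)) ⊓
      conjSub g (A i' ⊓ conjSub w'⁻¹ (B j')) ≠ ⊥) :
    i = i' ∧ j = j' ∧
      conjSub g (A i' ⊓ conjSub w'⁻¹ (B j')) = A i ⊓ conjSub w⁻¹ (B j) ∧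
      (i = i' → j = j' → w = w' → g ∈ A i ⊓ conjSub w⁻¹ (B j)) := by
  obtain ⟨⟨x, hx⟩, hx1⟩ := Subgroup.ne_bot_iff_exists_ne_one.mp hnt
  simp only [ne_eq, Subgroup.mk_eq_one] at hx1
  rw [Subgroup.mem_inf, Subgroup.mem_inf, conjSub_inf, Subgroup.mem_inf] at hx
  obtain ⟨⟨hxA, hxB⟩, hxA', hxB'⟩ := hx
  -- i = i' and g ∈ A i
  have h1 : A i ⊓ conjSub g (A i') ≠ ⊥ :=
    ne_bot_of_mem (Subgroup.mem_inf.mpr ⟨hxA, hxA'⟩) hx1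
  obtain ⟨hii, hgA⟩ := hA i i' g h1
  -- the B side: conjugate by w
  have hBx : w * x * w⁻¹ ∈ B j := by
    rw [mem_conjSub] at hxB; simpa using hxB
  have hBx' : w * x * w⁻¹ ∈ conjSub (w * g * w'⁻¹) (B j') := by
    rw [← conjSub_mul] at hxB'
    rw [mem_conjSub]
    rw [mem_conjSub] at hxB'
    convert hxB' using 1
    group
  have h2 : B j ⊓ conjSub (w * g * w'⁻¹) (B j') ≠ ⊥ := by
    apply ne_bot_of_mem (Subgroup.mem_inf.mpr ⟨hBx, hBx'⟩)
    intro h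
    apply hx1
    have : x = w⁻¹ * (w * x * w⁻¹) * w := by group
    rw [this, h]; group
  obtain ⟨hjj, hgB⟩ := hB j j' (w * g * w'⁻¹) h2
  subst hii; subst hjj
  refine ⟨rfl, rfl, ?_, ?_⟩
  · rw [conjSub_inf, conjSub_self hgA, ← conjSub_mul]
    congr 1
    have : g * w'⁻¹ = w⁻¹ * (w * g * w'⁻¹) := by group
    rw [this, conjSub_mul, conjSub_self hgB]
  · intro _ _ hww
    subst hww
    refine Subgroup.mem_inf.mpr ⟨hgA, ?_⟩
    rw [mem_conjSub]
    simpa using hgB
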